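/- The Lambert W function satisfies W(k) = log k − log log k + o(1) as k → ∞. -/

import Mathlib

open Real Finset Filter

/-- Number of unordered factorizations of `n` into parts `> 1`. -/
noncomputable def littlef (n : ℕ) : ℕ :=
  Nat.card {s : Multiset ℕ // s.prod = n ∧ ∀ a ∈ s, 1 < a}

/-- Number of unordered factorizations of `n` into pairwise coprime parts `> 1`. -/
noncomputable def bigF (n : ℕ) : ℕ :=
  Nat.card {s : Multiset ℕ // s.prod = n ∧ (∀ a ∈ s, 1 < a) ∧ s.Pairwise Nat.Coprime}

/-- Number of ordered factorizations of `n` into parts `> 1`. -/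
noncomputable def littleg (n : ℕ) : ℕ :=
  Nat.card {l : List ℕ // l.prod = n ∧ ∀ a ∈ l, 1 < a}

/-- Number of ordered factorizations of `n` into pairwise coprime parts `> 1`. -/
noncomputable def bigG (n : ℕ) : ℕ :=
  Nat.card {l : List ℕ // l.prod = n ∧ (∀ a ∈ l, 1 < a) ∧ l.Pairwise Nat.Coprime}

/-- The `k`-th Bell number: the number of set partitions of a `k`-element set. -/
noncomputable def bell (k : ℕ) : ℕ :=
  Nat.card (Finpartition (Finset.univ : Finset (Fin k)))

/-- The `k`-th ordered Bell (Fubini) number: the number of ordered set partitions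
of a `k`-element set, i.e. lists of pairwise disjoint nonempty blocks covering it. -/
noncomputable def fubini (k : ℕ) : ℕ :=
  Nat.card {l : List (Finset (Fin k)) //
    (∀ s ∈ l, s.Nonempty) ∧ l.Pairwise Disjoint ∧ l.foldr (· ∪ ·) ∅ = Finset.univ}

/-- `ω n`: the number of distinct prime factors of `n`. -/
def omegaN (n : ℕ) : ℕ := n.primeFactors.card

/-- `π(x, k)`: the number of `2 ≤ n ≤ x` with exactly `k` distinct prime factors. -/
noncomputable def piOmega (x : ℝ) (k : ℕ) : ℕ :=
  Nat.card {n : ℕ // 2 ≤ n ∧ (n : ℝ) ≤ x ∧ omegaN n = k}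

/-- `L(x) = exp(log x · log log log x / log log x)`. -/
noncomputable def Lfun (x : ℝ) : ℝ :=
  Real.exp (Real.log x * Real.log (Real.log (Real.log x)) / Real.log (Real.log x))

theorem lambertW_asymptotic (W : ℝ → ℝ)
    (hW : ∀ x : ℝ, 0 < x → 0 < W x ∧ W x * Real.exp (W x) = x) :
    Filter.Tendsto (fun k : ℝ => W k - Real.log k + Real.log (Real.log k))
      Filter.atTop (nhds 0) := by
  have hWtop : Tendsto W atTop atTop := by
    rw [tendsto_atTop_atTop]
    intro M
    refine ⟨max 1 (M * Real.exp M), fun x hx => ?_⟩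
    have hx0 : (0:ℝ) < x := lt_of_lt_of_le one_pos ((le_max_left _ _).trans hx)
    obtain ⟨hWpos, hWeq⟩ := hW x hx0
    by_contra h
    push_neg at h
    have hM : 0 < M := hWpos.trans h
    have hlt : x < M * Real.exp M := by
      rw [← hWeq]
      calc W x * Real.exp (W x) < M * Real.exp (W x) :=
            mul_lt_mul_of_pos_right h (Real.exp_pos _)
        _ ≤ M * Real.exp M :=
            mul_le_mul_of_nonneg_left (Real.exp_le_exp.mpr h.le) hM.le
    exact absurd hlt (not_lt.mpr ((le_max_right _ _).trans hx))
  have hlog : ∀ x : ℝ, 0 < x → Real.log x = W x + Real.log (W x) := by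
    intro x hx
    obtain ⟨hWpos, hWeq⟩ := hW x hx
    have h := congrArg Real.log hWeq
    rw [Real.log_mul hWpos.ne' (Real.exp_pos _).ne', Real.log_exp] at h
    linarith
  have hu : Tendsto (fun x => Real.log (W x) / W x) atTop (nhds 0) :=
    (Real.isLittleO_log_id_atTop.tendsto_div_nhds_zero).comp hWtop
  have hmain : Tendsto (fun x => Real.log (1 + Real.log (W x) / W x)) atTop (nhds 0) := by
    have h1 : Tendsto (fun x => 1 + Real.log (W x) / W x) atTop (nhds 1) := by
      simpa using (tendsto_const_nhds (x := (1:ℝ))).add hu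
    have := (Real.continuousAt_log (by norm_num : (1:ℝ) ≠ 0)).tendsto.comp h1
    simpa [Function.comp_def] using this
  refine hmain.congr' ?_
  have hev : ∀ᶠ x : ℝ in atTop, 1 ≤ W x := hWtop.eventually_ge_atTop 1
  filter_upwards [hev, eventually_gt_atTop (0:ℝ)] with x hW1 hx0
  obtain ⟨hWpos, _⟩ := hW x hx0
  have hl := hlog x hx0
  have hWne : W x ≠ 0 := hWpos.ne'
  have hlogx : 0 < Real.log x := by
    rw [hl]
    have : 0 ≤ Real.log (W x) := Real.log_nonneg hW1
    linarith
  have h2 : 1 + Real.log (W x) / W x = Real.log x / W x := by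
    rw [hl]; field_simp
  rw [h2, Real.log_div hlogx.ne' hWne]
  rw [hl]; ring
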